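/- Let ψ > 0 and γ₁, γ₂ ∈ ℝ, with mᵢ = (γᵢ + √(ψ+γᵢ²))/ψ. Then with ρ = 0, the formula η = 1/[√((ψ+γ₁²+γ₂²)(m₁²+m₂²)) − m₁γ₁ − m₂γ₂] satisfies 0 < η < 1. -/

import Mathlib

set_option maxHeartbeats 1600000 in
/-- For `ρ = 0`, the GH residual tail dependence coefficient
`η = 1/(√((ψ+γ₁²+γ₂²)(m₁²+m₂²)) − m₁γ₁ − m₂γ₂)` satisfies `0 < η < 1`. -/
theorem gh_eta_rho_zero_mem_Ioo (ψ γ₁ γ₂ : ℝ) (hψ : 0 < ψ) :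
    let m₁ := (γ₁ + Real.sqrt (ψ + γ₁ ^ 2)) / ψ
    let m₂ := (γ₂ + Real.sqrt (ψ + γ₂ ^ 2)) / ψ
    0 < 1 / (Real.sqrt ((ψ + γ₁ ^ 2 + γ₂ ^ 2) * (m₁ ^ 2 + m₂ ^ 2))
          - m₁ * γ₁ - m₂ * γ₂) ∧
    1 / (Real.sqrt ((ψ + γ₁ ^ 2 + γ₂ ^ 2) * (m₁ ^ 2 + m₂ ^ 2))
          - m₁ * γ₁ - m₂ * γ₂) < 1 := by
  intro m₁ m₂
  set s₁ := Real.sqrt (ψ + γ₁ ^ 2) with hs₁def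
  set s₂ := Real.sqrt (ψ + γ₂ ^ 2) with hs₂def
  have hp1 : (0:ℝ) < ψ + γ₁ ^ 2 := by positivity
  have hp2 : (0:ℝ) < ψ + γ₂ ^ 2 := by positivity
  have hs1sq : s₁ ^ 2 = ψ + γ₁ ^ 2 := Real.sq_sqrt hp1.le
  have hs2sq : s₂ ^ 2 = ψ + γ₂ ^ 2 := Real.sq_sqrt hp2.le
  have hs1pos : 0 < s₁ := Real.sqrt_pos.mpr hp1
  have hs2pos : 0 < s₂ := Real.sqrt_pos.mpr hp2
  have hg1 : γ₁ < s₁ := by nlinarith [hs1sq, hs1pos, hψ]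
  have hg2 : γ₂ < s₂ := by nlinarith [hs2sq, hs2pos, hψ]
  have hm1 : ψ * m₁ = γ₁ + s₁ := by show ψ * ((γ₁ + s₁) / ψ) = γ₁ + s₁; field_simp
  have hm2 : ψ * m₂ = γ₂ + s₂ := by show ψ * ((γ₂ + s₂) / ψ) = γ₂ + s₂; field_simp
  clear_value m₁ m₂
  have hm1pos : 0 < m₁ := by
    have h : 0 < ψ * m₁ := by nlinarith [hg1, hs1pos]
    nlinarith [h, hψ]
  have hm2pos : 0 < m₂ := by
    have h : 0 < ψ * m₂ := by nlinarith [hg2, hs2pos]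
    nlinarith [h, hψ]
  -- key AM-GM style strict inequalities
  have hkey1 : 2 * γ₁ * s₁ < ψ + 2 * γ₁ ^ 2 := by
    nlinarith [mul_pos (sub_pos.2 hg1) (sub_pos.2 hg1), hs1sq]
  have hkey2 : 2 * γ₂ * s₂ < ψ + 2 * γ₂ ^ 2 := by
    nlinarith [mul_pos (sub_pos.2 hg2) (sub_pos.2 hg2), hs2sq]
  -- squared identities
  have h1sq : (ψ * m₁) ^ 2 = (γ₁ + s₁) ^ 2 := by rw [hm1]
  have h2sq : (ψ * m₂) ^ 2 = (γ₂ + s₂) ^ 2 := by rw [hm2]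
  have hq1 : ψ * m₁ ^ 2 = 2 * (m₁ * γ₁) + 1 := by
    have h' : ψ * (ψ * m₁ ^ 2) = ψ * (2 * (m₁ * γ₁) + 1) := by
      linear_combination h1sq - 2 * γ₁ * hm1 + hs1sq
    exact mul_left_cancel₀ (ne_of_gt hψ) h'
  have hq2 : ψ * m₂ ^ 2 = 2 * (m₂ * γ₂) + 1 := by
    have h' : ψ * (ψ * m₂ ^ 2) = ψ * (2 * (m₂ * γ₂) + 1) := by
      linear_combination h2sq - 2 * γ₂ * hm2 + hs2sq
    exact mul_left_cancel₀ (ne_of_gt hψ) h'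
  have he1 : ψ ^ 2 * m₁ ^ 2 = ψ + 2 * γ₁ ^ 2 + 2 * γ₁ * s₁ := by
    linear_combination h1sq + hs1sq
  have he2 : ψ ^ 2 * m₂ ^ 2 = ψ + 2 * γ₂ ^ 2 + 2 * γ₂ * s₂ := by
    linear_combination h2sq + hs2sq
  have hsum : ψ * (m₁ ^ 2 + m₂ ^ 2) = 2 * (m₁ * γ₁ + m₂ * γ₂) + 2 := by
    linear_combination hq1 + hq2
  have hS : 0 < m₁ ^ 2 + m₂ ^ 2 := by positivity
  -- A > ψ² S / 4
  have hAS : ψ ^ 2 * (m₁ ^ 2 + m₂ ^ 2) / 4 < ψ + γ₁ ^ 2 + γ₂ ^ 2 := by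
    nlinarith [he1, he2, hkey1, hkey2]
  have h1G : 0 < m₁ * γ₁ + m₂ * γ₂ + 1 := by nlinarith [hsum, hS, hψ]
  have heq : (m₁ * γ₁ + m₂ * γ₂ + 1) ^ 2
      = ψ ^ 2 * (m₁ ^ 2 + m₂ ^ 2) / 4 * (m₁ ^ 2 + m₂ ^ 2) := by
    linear_combination (-(m₁ * γ₁ + m₂ * γ₂ + 1 + ψ * (m₁ ^ 2 + m₂ ^ 2) / 2) / 2) * hsum
  have hlt : (m₁ * γ₁ + m₂ * γ₂ + 1) ^ 2
      < (ψ + γ₁ ^ 2 + γ₂ ^ 2) * (m₁ ^ 2 + m₂ ^ 2) := by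
    rw [heq]
    exact mul_lt_mul_of_pos_right hAS hS
  have hsqrt : m₁ * γ₁ + m₂ * γ₂ + 1
      < Real.sqrt ((ψ + γ₁ ^ 2 + γ₂ ^ 2) * (m₁ ^ 2 + m₂ ^ 2)) :=
    (Real.lt_sqrt h1G.le).mpr hlt
  have hD : 1 < Real.sqrt ((ψ + γ₁ ^ 2 + γ₂ ^ 2) * (m₁ ^ 2 + m₂ ^ 2))
      - m₁ * γ₁ - m₂ * γ₂ := by linarith
  have hDpos : 0 < Real.sqrt ((ψ + γ₁ ^ 2 + γ₂ ^ 2) * (m₁ ^ 2 + m₂ ^ 2))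
      - m₁ * γ₁ - m₂ * γ₂ := by linarith
  constructor
  · positivity
  · rw [div_lt_one hDpos]; exact hD
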